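/- Let Q be a medial quandle whose orbits are all finite. If the greatest common divisor of the orbit sizes is 1, then Q is 3-reductive. -/

import Mathlib

/-- The set of left translations of a binary algebra `(Q, op)`, viewed as permutations:
permutations `f` such that `f x = op a x` for some `a`. -/
def translations {Q : Type*} (op : Q → Q → Q) : Set (Equiv.Perm Q) :=
  { f | ∃ a : Q, ∀ x : Q, f x = op a x }

/-- The (left) multiplication group `LMlt(Q)`: the subgroup of the symmetric group
generated by the left translations. -/
def LMlt {Q : Type*} (op : Q → Q → Q) : Subgroup (Equiv.Perm Q) :=
  Subgroup.closure (translations op)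

/-- The displacement group `Dis(Q)`: the subgroup generated by all `L_a * L_b⁻¹`. -/
def Dis {Q : Type*} (op : Q → Q → Q) : Subgroup (Equiv.Perm Q) :=
  Subgroup.closure { f | ∃ g ∈ translations op, ∃ h ∈ translations op, f = g * h⁻¹ }

/-- `(Q, op)` is a quandle: idempotent, left distributive, left quasigroup. -/
def IsQuandle {Q : Type*} (op : Q → Q → Q) : Prop :=
  (∀ x, op x x = x) ∧
  (∀ x y z, op x (op y z) = op (op x y) (op x z)) ∧
  (∀ x y, ∃! u, op x u = y)

/-- `(Q, op)` is medial. -/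
def IsMedial {Q : Type*} (op : Q → Q → Q) : Prop :=
  ∀ x y u v, op (op x y) (op u v) = op (op x u) (op y v)

/-- The orbit of `e` under the multiplication group. -/
def qOrbit {Q : Type*} (op : Q → Q → Q) (e : Q) : Set Q :=
  { y | ∃ f ∈ LMlt op, f e = y }

/-- The orbit of `e` under the displacement group. -/
def disOrbit {Q : Type*} (op : Q → Q → Q) (e : Q) : Set Q :=
  { y | ∃ f ∈ Dis op, f e = y }

namespace ThreeRedAux

variable {Q : Type*} {op : Q → Q → Q}

theorem perm_apply_inv_self {α : Type*} (f : Equiv.Perm α) (x : α) : f (f⁻¹ x) = x :=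
  Equiv.apply_symm_apply f x

theorem perm_inv_apply_self {α : Type*} (f : Equiv.Perm α) (x : α) : f⁻¹ (f x) = x :=
  Equiv.symm_apply_apply f x

theorem op_bijective (hQ : IsQuandle op) (a : Q) : Function.Bijective (op a) := by
  constructor
  · intro u v h
    obtain ⟨w, -, hw⟩ := hQ.2.2 a (op a v)
    rw [hw u h, hw v rfl]
  · intro z
    obtain ⟨u, hu, -⟩ := hQ.2.2 a z
    exact ⟨u, hu⟩

/-- The left translation as a permutation. -/
noncomputable def LT (hQ : IsQuandle op) (a : Q) : Equiv.Perm Q :=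
  Equiv.ofBijective (op a) (op_bijective hQ a)

@[simp] theorem LT_apply (hQ : IsQuandle op) (a x : Q) : LT hQ a x = op a x := rfl

theorem LT_mem_translations (hQ : IsQuandle op) (a : Q) : LT hQ a ∈ translations op :=
  ⟨a, fun _ => rfl⟩

theorem LT_mem_LMlt (hQ : IsQuandle op) (a : Q) : LT hQ a ∈ LMlt op :=
  Subgroup.subset_closure (LT_mem_translations hQ a)

theorem LT_mem_dis_gen (hQ : IsQuandle op) (a b : Q) :
    LT hQ a * (LT hQ b)⁻¹ ∈
      { f | ∃ g ∈ translations op, ∃ h ∈ translations op, f = g * h⁻¹ } :=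
  ⟨LT hQ a, LT_mem_translations hQ a, LT hQ b, LT_mem_translations hQ b, rfl⟩

theorem LT_mem_Dis (hQ : IsQuandle op) (a b : Q) :
    LT hQ a * (LT hQ b)⁻¹ ∈ Dis op :=
  Subgroup.subset_closure (LT_mem_dis_gen hQ a b)

theorem translations_eq (hQ : IsQuandle op) {f : Equiv.Perm Q} (hf : f ∈ translations op) :
    ∃ a, f = LT hQ a := by
  obtain ⟨a, ha⟩ := hf
  exact ⟨a, Equiv.ext fun x => ha x⟩

theorem gen_form (hQ : IsQuandle op) {f : Equiv.Perm Q}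
    (hf : f ∈ { f | ∃ g ∈ translations op, ∃ h ∈ translations op, f = g * h⁻¹ }) :
    ∃ a b, f = LT hQ a * (LT hQ b)⁻¹ := by
  obtain ⟨g, hg, h, hh, rfl⟩ := hf
  obtain ⟨a, rfl⟩ := translations_eq hQ hg
  obtain ⟨b, rfl⟩ := translations_eq hQ hh
  exact ⟨a, b, rfl⟩

/-- The mediality law on translations: `L_{x·y} L_u = L_{x·u} L_y`. -/
theorem medL (hQ : IsQuandle op) (hM : IsMedial op) (x y u : Q) :
    LT hQ (op x y) * LT hQ u = LT hQ (op x u) * LT hQ y :=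
  Equiv.ext fun w => hM x y u w

/-- Left distributivity: `L_x L_y = L_{x·y} L_x`. -/
theorem ldL (hQ : IsQuandle op) (x y : Q) :
    LT hQ x * LT hQ y = LT hQ (op x y) * LT hQ x :=
  Equiv.ext fun w => hQ.2.1 x y w

theorem comm_gen (hQ : IsQuandle op) (hM : IsMedial op) (a b c d : Q) :
    (LT hQ a * (LT hQ b)⁻¹) * (LT hQ c * (LT hQ d)⁻¹)
      = (LT hQ c * (LT hQ d)⁻¹) * (LT hQ a * (LT hQ b)⁻¹) := by
  set A := LT hQ a with hA
  set B := LT hQ b with hB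
  set C := LT hQ c with hC
  set Dd := LT hQ d with hDd
  set P := LT hQ (op c b) with hP
  set Qc := LT hQ (op c a) with hQc
  set R := LT hQ (op c d) with hR
  have h1 : P * A = Qc * B := medL hQ hM c b a
  have h2 : Qc * C = C * A := by
    have h := medL hQ hM c a c
    rwa [hQ.1 c] at h
  have h3 : P * Dd = R * B := medL hQ hM c b d
  have h4 : R * A = Qc * Dd := medL hQ hM c d a
  have h5 : C * B = P * C := ldL hQ c b
  have h4' : R⁻¹ * Qc = A * Dd⁻¹ := by
    calc R⁻¹ * Qc = R⁻¹ * (Qc * Dd) * Dd⁻¹ := by group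
    _ = R⁻¹ * (R * A) * Dd⁻¹ := by rw [← h4]
    _ = A * Dd⁻¹ := by group
  have hL : A * B⁻¹ * (C * Dd⁻¹) = C * B⁻¹ * A * Dd⁻¹ := by
    calc A * B⁻¹ * (C * Dd⁻¹)
        = P⁻¹ * (P * A) * B⁻¹ * C * Dd⁻¹ := by group
      _ = P⁻¹ * (Qc * B) * B⁻¹ * C * Dd⁻¹ := by rw [h1]
      _ = P⁻¹ * (Qc * C) * Dd⁻¹ := by group
      _ = P⁻¹ * (C * A) * Dd⁻¹ := by rw [h2]
      _ = P⁻¹ * (C * B) * B⁻¹ * A * Dd⁻¹ := by group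
      _ = P⁻¹ * (P * C) * B⁻¹ * A * Dd⁻¹ := by rw [h5]
      _ = C * B⁻¹ * A * Dd⁻¹ := by group
  have hR2 : C * Dd⁻¹ * (A * B⁻¹) = C * B⁻¹ * A * Dd⁻¹ := by
    calc C * Dd⁻¹ * (A * B⁻¹)
        = C * Dd⁻¹ * (P⁻¹ * (P * A) * B⁻¹) := by group
      _ = C * Dd⁻¹ * (P⁻¹ * (Qc * B) * B⁻¹) := by rw [h1]
      _ = C * (P * Dd)⁻¹ * Qc := by group
      _ = C * (R * B)⁻¹ * Qc := by rw [h3]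
      _ = C * B⁻¹ * (R⁻¹ * Qc) := by group
      _ = C * B⁻¹ * (A * Dd⁻¹) := by rw [h4']
      _ = C * B⁻¹ * A * Dd⁻¹ := by group
  rw [hL, hR2]

theorem comm_with_gen (hQ : IsQuandle op) (hM : IsMedial op) (a b : Q)
    {h : Equiv.Perm Q} (hh : h ∈ Dis op) :
    Commute (LT hQ a * (LT hQ b)⁻¹) h := by
  have hh' : h ∈ Subgroup.closure
      { f | ∃ g ∈ translations op, ∃ h ∈ translations op, f = g * h⁻¹ } := hh
  clear hh
  induction hh' using Subgroup.closure_induction with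
  | mem x hx =>
    obtain ⟨c, d, rfl⟩ := gen_form hQ hx
    exact comm_gen hQ hM a b c d
  | one => exact Commute.one_right _
  | mul x y hx hy px py => exact px.mul_right py
  | inv x hx px => exact px.inv_right

theorem dis_comm (hQ : IsQuandle op) (hM : IsMedial op) {g h : Equiv.Perm Q}
    (hg : g ∈ Dis op) (hh : h ∈ Dis op) : Commute g h := by
  have hg' : g ∈ Subgroup.closure
      { f | ∃ g ∈ translations op, ∃ h ∈ translations op, f = g * h⁻¹ } := hg
  clear hg
  induction hg' using Subgroup.closure_induction with
  | mem x hx =>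
    obtain ⟨a, b, rfl⟩ := gen_form hQ hx
    exact comm_with_gen hQ hM a b hh
  | one => exact Commute.one_left _
  | mul x y hx hy px py => exact px.mul_left py
  | inv x hx px => exact px.inv_left

/-- `R_y` is an endomorphism: `(p·q)·y = (p·y)·(q·y)`. -/
theorem homR (hQ : IsQuandle op) (hM : IsMedial op) (y p q : Q) :
    op (op p q) y = op (op p y) (op q y) := by
  have h := hM p q y y
  rwa [hQ.1 y] at h

/-- The auxiliary subgroup `D`: generated by `L_{a·y} L_{b·y}⁻¹`. -/
noncomputable def DD (hQ : IsQuandle op) (y : Q) : Subgroup (Equiv.Perm Q) :=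
  Subgroup.closure { f | ∃ a b : Q, f = LT hQ (op a y) * (LT hQ (op b y))⁻¹ }

theorem DD_le_Dis (hQ : IsQuandle op) (y : Q) : DD hQ y ≤ Dis op := by
  apply (Subgroup.closure_le _).2
  rintro f ⟨a, b, rfl⟩
  exact LT_mem_Dis hQ (op a y) (op b y)

theorem key_gen (hQ : IsQuandle op) (hM : IsMedial op) (y a b : Q) (w : Q) :
    op ((LT hQ a * (LT hQ b)⁻¹) w) y
      = (LT hQ (op a y) * (LT hQ (op b y))⁻¹) (op w y) := by
  have hbinv : op ((LT hQ b)⁻¹ w) y = (LT hQ (op b y))⁻¹ (op w y) := by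
    rw [Equiv.Perm.inv_def, Equiv.Perm.inv_def, Equiv.eq_symm_apply]
    show op (op b y) (op ((LT hQ b).symm w) y) = op w y
    rw [← homR hQ hM y b _]
    show op (LT hQ b ((LT hQ b).symm w)) y = op w y
    rw [Equiv.apply_symm_apply]
  show op (LT hQ a ((LT hQ b)⁻¹ w)) y = LT hQ (op a y) ((LT hQ (op b y))⁻¹ (op w y))
  rw [← hbinv]
  show op (op a ((LT hQ b)⁻¹ w)) y = op (op a y) (op ((LT hQ b)⁻¹ w) y)
  exact homR hQ hM y a _

theorem key1 (hQ : IsQuandle op) (hM : IsMedial op) (y : Q) {g : Equiv.Perm Q}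
    (hg : g ∈ Dis op) : ∃ σ ∈ DD hQ y, ∀ w, op (g w) y = σ (op w y) := by
  have hg' : g ∈ Subgroup.closure
      { f | ∃ g ∈ translations op, ∃ h ∈ translations op, f = g * h⁻¹ } := hg
  clear hg
  induction hg' using Subgroup.closure_induction with
  | mem x hx =>
    obtain ⟨a, b, rfl⟩ := gen_form hQ hx
    exact ⟨LT hQ (op a y) * (LT hQ (op b y))⁻¹,
      Subgroup.subset_closure ⟨a, b, rfl⟩, key_gen hQ hM y a b⟩
  | one => exact ⟨1, one_mem _, fun w => rfl⟩
  | mul x z hx hz px pz =>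
    obtain ⟨σ₁, hσ₁, e₁⟩ := px
    obtain ⟨σ₂, hσ₂, e₂⟩ := pz
    refine ⟨σ₁ * σ₂, mul_mem hσ₁ hσ₂, fun w => ?_⟩
    calc op ((x * z) w) y = op (x (z w)) y := rfl
      _ = σ₁ (op (z w) y) := e₁ (z w)
      _ = σ₁ (σ₂ (op w y)) := by rw [e₂ w]
      _ = (σ₁ * σ₂) (op w y) := rfl
  | inv x hx px =>
    obtain ⟨σ, hσ, e⟩ := px
    refine ⟨σ⁻¹, inv_mem hσ, fun w => ?_⟩
    have h := e (x⁻¹ w)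
    rw [perm_apply_inv_self] at h
    rw [h]
    exact (perm_inv_apply_self σ _).symm

theorem key2 (hQ : IsQuandle op) (hM : IsMedial op) (y : Q) {σ : Equiv.Perm Q}
    (hσ : σ ∈ DD hQ y) : ∃ g ∈ Dis op, ∀ w, op (g w) y = σ (op w y) := by
  have hσ' : σ ∈ Subgroup.closure
      { f | ∃ a b : Q, f = LT hQ (op a y) * (LT hQ (op b y))⁻¹ } := hσ
  clear hσ
  induction hσ' using Subgroup.closure_induction with
  | mem x hx =>
    obtain ⟨a, b, rfl⟩ := hx
    exact ⟨LT hQ a * (LT hQ b)⁻¹, LT_mem_Dis hQ a b, key_gen hQ hM y a b⟩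
  | one => exact ⟨1, one_mem _, fun w => rfl⟩
  | mul x z hx hz px pz =>
    obtain ⟨g₁, hg₁, e₁⟩ := px
    obtain ⟨g₂, hg₂, e₂⟩ := pz
    refine ⟨g₁ * g₂, mul_mem hg₁ hg₂, fun w => ?_⟩
    calc op ((g₁ * g₂) w) y = op (g₁ (g₂ w)) y := rfl
      _ = x (op (g₂ w) y) := e₁ (g₂ w)
      _ = x (z (op w y)) := by rw [e₂ w]
      _ = (x * z) (op w y) := rfl
  | inv x hx px =>
    obtain ⟨g, hg, e⟩ := px
    refine ⟨g⁻¹, inv_mem hg, fun w => ?_⟩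
    have h := e (g⁻¹ w)
    rw [perm_apply_inv_self] at h
    rw [h]
    exact (perm_inv_apply_self x _).symm

theorem Dis_le_LMlt : Dis op ≤ LMlt op := by
  apply (Subgroup.closure_le _).2
  rintro f ⟨g, hg, h, hh, rfl⟩
  exact mul_mem (Subgroup.subset_closure hg) (inv_mem (Subgroup.subset_closure hh))

theorem orb_dis (hQ : IsQuandle op) {g : Equiv.Perm Q} (hg : g ∈ LMlt op) :
    ∀ w, ∃ h ∈ Dis op, g w = h w := by
  have hg' : g ∈ Subgroup.closure (translations op) := hg
  clear hg
  induction hg' using Subgroup.closure_induction with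
  | mem f hf =>
    intro w
    obtain ⟨a, rfl⟩ := translations_eq hQ hf
    refine ⟨LT hQ a * (LT hQ w)⁻¹, LT_mem_Dis hQ a w, ?_⟩
    have hw : (LT hQ w)⁻¹ w = w := by
      rw [Equiv.Perm.inv_def, Equiv.symm_apply_eq]
      exact (hQ.1 w).symm
    show LT hQ a w = LT hQ a ((LT hQ w)⁻¹ w)
    rw [hw]
  | one => exact fun w => ⟨1, one_mem _, rfl⟩
  | mul x z hx hz px pz =>
    intro w
    obtain ⟨h₂, m₂, e₂⟩ := pz w
    obtain ⟨h₁, m₁, e₁⟩ := px (z w)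
    refine ⟨h₁ * h₂, mul_mem m₁ m₂, ?_⟩
    calc (x * z) w = x (z w) := rfl
      _ = h₁ (z w) := e₁
      _ = h₁ (h₂ w) := by rw [← e₂]
      _ = (h₁ * h₂) w := rfl
  | inv x hx px =>
    intro w
    obtain ⟨h, m, e⟩ := px (x⁻¹ w)
    rw [perm_apply_inv_self] at e
    refine ⟨h⁻¹, inv_mem m, h.injective ?_⟩
    rw [perm_apply_inv_self]
    exact e.symm

theorem mem_orbit_dis (hQ : IsQuandle op) {e w : Q} (hw : w ∈ qOrbit op e) :
    ∃ g ∈ Dis op, g e = w := by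
  obtain ⟨f, hf, rfl⟩ := hw
  obtain ⟨h, hh, he⟩ := orb_dis hQ hf e
  exact ⟨h, hh, he.symm⟩

theorem orbit_closed (hQ : IsQuandle op) {e w : Q} {g : Equiv.Perm Q}
    (hg : g ∈ Dis op) (hw : w ∈ qOrbit op e) : g w ∈ qOrbit op e := by
  obtain ⟨f, hf, rfl⟩ := hw
  exact ⟨g * f, mul_mem (Dis_le_LMlt hg) hf, rfl⟩

end ThreeRedAux

open ThreeRedAux in
/-- Corollary 6.3: a medial quandle with finite orbits whose orbit sizes have greatest
common divisor 1 is 3-reductive. -/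
theorem three_reductive_of_coprime_orbit_sizes {Q : Type*} (op : Q → Q → Q)
    (hQ : IsQuandle op) (hM : IsMedial op)
    (hfin : ∀ e : Q, (qOrbit op e).Finite)
    (hgcd : ∀ d : ℕ, (∀ e : Q, d ∣ (qOrbit op e).ncard) → d = 1) :
    ∀ x y : Q, op (op (op x y) y) y = y := by
  classical
  intro x y
  -- the D-orbit of a point
  set Dorb : Q → Set Q := fun u => { z | ∃ σ ∈ DD hQ y, σ u = z } with hDorb
  -- image of an orbit under `· op y` is a D-orbit
  have himg : ∀ e : Q, (fun w => op w y) '' (qOrbit op e) = Dorb (op e y) := by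
    intro e
    ext z
    constructor
    · rintro ⟨w, hw, rfl⟩
      obtain ⟨g, hgD, hge⟩ := mem_orbit_dis hQ hw
      obtain ⟨σ, hσ, hk⟩ := key1 hQ hM y hgD
      exact ⟨σ, hσ, by rw [← hk e, hge]⟩
    · rintro ⟨σ, hσ, rfl⟩
      obtain ⟨g, hgDis, hk⟩ := key2 hQ hM y hσ
      exact ⟨g e, ⟨g, Dis_le_LMlt hgDis, rfl⟩, hk e⟩
  -- all D-orbits of points of the orbit of y have the same size
  have hDorbcard : ∀ u, u ∈ qOrbit op y → (Dorb u).ncard = (Dorb y).ncard := by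
    intro u hu
    obtain ⟨h, hhD, hhe⟩ := mem_orbit_dis hQ hu
    have hgu : h⁻¹ u = y := by
      rw [Equiv.Perm.inv_def, Equiv.symm_apply_eq]
      exact hhe.symm
    have himgset : (⇑(h⁻¹)) '' (Dorb u) = Dorb y := by
      ext z
      constructor
      · rintro ⟨_, ⟨σ, hσ, rfl⟩, rfl⟩
        refine ⟨σ, hσ, ?_⟩
        have hc : Commute h⁻¹ σ := dis_comm hQ hM (inv_mem hhD) (DD_le_Dis hQ y hσ)
        calc σ y = σ (h⁻¹ u) := by rw [hgu]
          _ = (σ * h⁻¹) u := rfl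
          _ = (h⁻¹ * σ) u := by rw [hc.eq]
          _ = h⁻¹ (σ u) := rfl
      · rintro ⟨σ, hσ, rfl⟩
        refine ⟨σ u, ⟨σ, hσ, rfl⟩, ?_⟩
        have hc : Commute h⁻¹ σ := dis_comm hQ hM (inv_mem hhD) (DD_le_Dis hQ y hσ)
        calc h⁻¹ (σ u) = (h⁻¹ * σ) u := rfl
          _ = (σ * h⁻¹) u := by rw [hc.eq]
          _ = σ (h⁻¹ u) := rfl
          _ = σ y := by rw [hgu]
    rw [← himgset, Set.ncard_image_of_injective _ (Equiv.injective _)]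
  set N := (Dorb y).ncard with hN
  -- N divides the size of every orbit
  have hdvd : ∀ e : Q, N ∣ (qOrbit op e).ncard := by
    intro e
    set s := (hfin e).toFinset with hs
    have hsmem : ∀ w, w ∈ s ↔ w ∈ qOrbit op e := fun w => Set.Finite.mem_toFinset _
    set t := s.image (fun w => op w y) with hts
    have hcard : s.card = ∑ b ∈ t, (s.filter fun w => op w y = b).card :=
      Finset.card_eq_sum_card_fiberwise (fun w hw => Finset.mem_image_of_mem _ hw)
    set m := (s.filter fun w => op w y = op e y).card with hm
    have hfib : ∀ b ∈ t, (s.filter fun w => op w y = b).card = m := by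
      intro b hb
      obtain ⟨x0, hx0, rfl⟩ := Finset.mem_image.mp hb
      have hx0' : x0 ∈ qOrbit op e := (hsmem x0).1 hx0
      obtain ⟨g, hgD, hge⟩ := mem_orbit_dis hQ hx0'
      obtain ⟨σ, hσ, hk⟩ := key1 hQ hM y hgD
      have himgf : (s.filter fun w => op w y = op e y).image (fun w => g w)
          = s.filter (fun w => op w y = op x0 y) := by
        ext z
        simp only [Finset.mem_image, Finset.mem_filter]
        constructor
        · rintro ⟨w, ⟨hws, hwc⟩, rfl⟩
          refine ⟨(hsmem _).2 (orbit_closed hQ hgD ((hsmem w).1 hws)), ?_⟩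
          rw [hk w, hwc, ← hk e, hge]
        · rintro ⟨hzs, hzc⟩
          refine ⟨g⁻¹ z, ⟨?_, ?_⟩, perm_apply_inv_self g z⟩
          · exact (hsmem _).2 (orbit_closed hQ (inv_mem hgD) ((hsmem z).1 hzs))
          · have h1 : σ (op (g⁻¹ z) y) = op z y := by
              rw [← hk (g⁻¹ z), perm_apply_inv_self]
            have h2 : σ (op e y) = op x0 y := by rw [← hk e, hge]
            have h3 : σ (op (g⁻¹ z) y) = σ (op e y) := by rw [h1, h2, hzc]
            exact σ.injective h3
      calc (s.filter fun w => op w y = op x0 y).card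
          = ((s.filter fun w => op w y = op e y).image (fun w => g w)).card := by
            rw [himgf]
        _ = m := Finset.card_image_of_injective _ (Equiv.injective g)
    have htN : t.card = N := by
      have hcoe : (↑t : Set Q) = Dorb (op e y) := by
        rw [hts, Finset.coe_image, Set.Finite.coe_toFinset, himg e]
      have h2 : t.card = (Dorb (op e y)).ncard := by
        rw [← hcoe, Set.ncard_coe_finset]
      rw [h2, hN]
      exact hDorbcard (op e y) ⟨LT hQ e, LT_mem_LMlt hQ e, rfl⟩
    have hne : (qOrbit op e).ncard = s.card := Set.ncard_eq_toFinset_card _ (hfin e)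
    refine ⟨m, ?_⟩
    rw [hne, hcard, Finset.sum_congr rfl hfib, Finset.sum_const, smul_eq_mul, htN]
  have hN1 : N = 1 := hgcd N hdvd
  obtain ⟨a, ha⟩ := Set.ncard_eq_one.mp hN1
  have hya : y ∈ Dorb y := ⟨1, one_mem _, rfl⟩
  have hay : a = y := by
    rw [ha] at hya
    exact (Set.mem_singleton_iff.mp hya).symm
  have hxy : op (op x y) y = y := by
    have h1 : op x y ∈ qOrbit op y := ⟨LT hQ x, LT_mem_LMlt hQ x, rfl⟩
    have h2 : op (op x y) y ∈ (fun w => op w y) '' (qOrbit op y) :=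
      Set.mem_image_of_mem _ h1
    rw [himg y, hQ.1 y, ha, hay] at h2
    exact Set.mem_singleton_iff.mp h2
  rw [hxy, hQ.1 y]
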